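/- Let ζ : ℝ³ → ℝ³ be a continuously differentiable vector field and let x₀ be a point where ζ(x₀) ≠ 0. Write ζ̂ = ζ/|ζ|. Then at x₀: curl(|ζ| ζ) = |ζ| curl ζ + (ζ × curl ζ) × ζ̂ − ζ × ((ζ̂·∇)ζ). -/

import Mathlib

open MeasureTheory Real

noncomputable section

/-- Partial derivative in the first (x) variable. -/
def pX (f : ℝ → ℝ → ℝ → ℝ) : ℝ → ℝ → ℝ → ℝ := fun x y z => deriv (fun s => f s y z) x
/-- Partial derivative in the second (y) variable. -/
def pY (f : ℝ → ℝ → ℝ → ℝ) : ℝ → ℝ → ℝ → ℝ := fun x y z => deriv (fun s => f x s z) y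
/-- Partial derivative in the third (z) variable. -/
def pZ (f : ℝ → ℝ → ℝ → ℝ) : ℝ → ℝ → ℝ → ℝ := fun x y z => deriv (fun s => f x y s) z

/-- First component of the curl of the vector field (f, g, h). -/
def curl1 (f g h : ℝ → ℝ → ℝ → ℝ) : ℝ → ℝ → ℝ → ℝ := fun x y z => pY h x y z - pZ g x y z
/-- Second component of the curl of the vector field (f, g, h). -/
def curl2 (f g h : ℝ → ℝ → ℝ → ℝ) : ℝ → ℝ → ℝ → ℝ := fun x y z => pZ f x y z - pX h x y z
/-- Third component of the curl of the vector field (f, g, h). -/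
def curl3 (f g h : ℝ → ℝ → ℝ → ℝ) : ℝ → ℝ → ℝ → ℝ := fun x y z => pX g x y z - pY f x y z

/-- C^k regularity of a scalar field on ℝ³ (as a function of the joint variable). -/
def ContK (k : ℕ) (f : ℝ → ℝ → ℝ → ℝ) : Prop :=
  ContDiff ℝ k (fun p : ℝ × ℝ × ℝ => f p.1 p.2.1 p.2.2)


/-- Key one-variable computation: derivative of `sqrt(F²+G²+H²) * K`. -/
lemma key_deriv (F G H K : ℝ → ℝ) (t : ℝ)
    (hF : DifferentiableAt ℝ F t) (hG : DifferentiableAt ℝ G t)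
    (hH : DifferentiableAt ℝ H t) (hK : DifferentiableAt ℝ K t)
    (hq : F t ^ 2 + G t ^ 2 + H t ^ 2 ≠ 0) :
    deriv (fun s => Real.sqrt (F s ^ 2 + G s ^ 2 + H s ^ 2) * K s) t
      = (F t * deriv F t + G t * deriv G t + H t * deriv H t)
          / Real.sqrt (F t ^ 2 + G t ^ 2 + H t ^ 2) * K t
        + Real.sqrt (F t ^ 2 + G t ^ 2 + H t ^ 2) * deriv K t := by
  have hqnn : (0:ℝ) ≤ F t ^ 2 + G t ^ 2 + H t ^ 2 := by positivity
  have hqpos : (0:ℝ) < F t ^ 2 + G t ^ 2 + H t ^ 2 := hqnn.lt_of_ne (Ne.symm hq)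
  have hs0 : Real.sqrt (F t ^ 2 + G t ^ 2 + H t ^ 2) ≠ 0 :=
    ne_of_gt (Real.sqrt_pos.mpr hqpos)
  have hq' : HasDerivAt (fun s => F s ^ 2 + G s ^ 2 + H s ^ 2)
      ((2 : ℕ) * F t ^ 1 * deriv F t + (2 : ℕ) * G t ^ 1 * deriv G t
        + (2 : ℕ) * H t ^ 1 * deriv H t) t :=
    ((hF.hasDerivAt.pow 2).add (hG.hasDerivAt.pow 2)).add (hH.hasDerivAt.pow 2)
  have hmain := (hq'.sqrt hq).mul hK.hasDerivAt
  rw [show (fun s => Real.sqrt (F s ^ 2 + G s ^ 2 + H s ^ 2) * K s) = (fun y => Real.sqrt (F y ^ 2 + G y ^ 2 + H y ^ 2)) * K from rfl, hmain.deriv]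
  have hsq : Real.sqrt (F t ^ 2 + G t ^ 2 + H t ^ 2) ^ 2
      = F t ^ 2 + G t ^ 2 + H t ^ 2 := Real.sq_sqrt hqnn
  field_simp
  ring

set_option maxHeartbeats 1600000 in
/-- Identity (T1Gb): at a point where ζ ≠ 0,
curl(|ζ|ζ) = |ζ| curl ζ + (ζ × curl ζ) × ζ̂ − ζ × ((ζ̂·∇)ζ), stated componentwise. -/
theorem curl_norm_mul_identity (z1 z2 z3 : ℝ → ℝ → ℝ → ℝ)
    (h1 : ContK 1 z1) (h2 : ContK 1 z2) (h3 : ContK 1 z3)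
    (x y z : ℝ)
    (hne : ¬((z1 x y z = 0) ∧ (z2 x y z = 0) ∧ (z3 x y z = 0))) :
    (let m : ℝ → ℝ → ℝ → ℝ :=
       fun a b c => Real.sqrt ((z1 a b c)^2 + (z2 a b c)^2 + (z3 a b c)^2)
     let n : ℝ := m x y z
     let zh1 : ℝ := z1 x y z / n
     let zh2 : ℝ := z2 x y z / n
     let zh3 : ℝ := z3 x y z / n
     let c1 : ℝ := curl1 z1 z2 z3 x y z
     let c2 : ℝ := curl2 z1 z2 z3 x y z
     let c3 : ℝ := curl3 z1 z2 z3 x y z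
     -- d = ζ × curl ζ
     let d1 : ℝ := z2 x y z * c3 - z3 x y z * c2
     let d2 : ℝ := z3 x y z * c1 - z1 x y z * c3
     let d3 : ℝ := z1 x y z * c2 - z2 x y z * c1
     -- e = (ζ̂·∇)ζ
     let e1 : ℝ := zh1 * pX z1 x y z + zh2 * pY z1 x y z + zh3 * pZ z1 x y z
     let e2 : ℝ := zh1 * pX z2 x y z + zh2 * pY z2 x y z + zh3 * pZ z2 x y z
     let e3 : ℝ := zh1 * pX z3 x y z + zh2 * pY z3 x y z + zh3 * pZ z3 x y z
     (curl1 (fun a b c => m a b c * z1 a b c) (fun a b c => m a b c * z2 a b c)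
        (fun a b c => m a b c * z3 a b c) x y z
        = n * c1 + (d2 * zh3 - d3 * zh2) - (z2 x y z * e3 - z3 x y z * e2))
     ∧ (curl2 (fun a b c => m a b c * z1 a b c) (fun a b c => m a b c * z2 a b c)
        (fun a b c => m a b c * z3 a b c) x y z
        = n * c2 + (d3 * zh1 - d1 * zh3) - (z3 x y z * e1 - z1 x y z * e3))
     ∧ (curl3 (fun a b c => m a b c * z1 a b c) (fun a b c => m a b c * z2 a b c)
        (fun a b c => m a b c * z3 a b c) x y z
        = n * c3 + (d1 * zh2 - d2 * zh1) - (z1 x y z * e2 - z2 x y z * e1))) := by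
  have hq : z1 x y z ^ 2 + z2 x y z ^ 2 + z3 x y z ^ 2 ≠ 0 := by
    intro h
    have e1 : z1 x y z ^ 2 = 0 :=
      le_antisymm (by nlinarith [sq_nonneg (z2 x y z), sq_nonneg (z3 x y z)]) (sq_nonneg _)
    have e2 : z2 x y z ^ 2 = 0 :=
      le_antisymm (by nlinarith [sq_nonneg (z1 x y z), sq_nonneg (z3 x y z)]) (sq_nonneg _)
    have e3 : z3 x y z ^ 2 = 0 :=
      le_antisymm (by nlinarith [sq_nonneg (z1 x y z), sq_nonneg (z2 x y z)]) (sq_nonneg _)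
    exact hne ⟨by nlinarith [e1], by nlinarith [e2], by nlinarith [e3]⟩
  have hqpos : (0:ℝ) < z1 x y z ^ 2 + z2 x y z ^ 2 + z3 x y z ^ 2 :=
    (by positivity : (0:ℝ) ≤ _).lt_of_ne (Ne.symm hq)
  have hs0 : Real.sqrt (z1 x y z ^ 2 + z2 x y z ^ 2 + z3 x y z ^ 2) ≠ 0 :=
    ne_of_gt (Real.sqrt_pos.mpr hqpos)
  have D1 := h1.differentiable (by simp)
  have D2 := h2.differentiable (by simp)
  have D3 := h3.differentiable (by simp)
  have hXc : DifferentiableAt ℝ (fun s : ℝ => (s, (y, z))) x :=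
    differentiableAt_id.prodMk (differentiableAt_const _)
  have hYc : DifferentiableAt ℝ (fun s : ℝ => (x, (s, z))) y :=
    (differentiableAt_const _).prodMk (differentiableAt_id.prodMk (differentiableAt_const _))
  have hZc : DifferentiableAt ℝ (fun s : ℝ => (x, (y, s))) z :=
    (differentiableAt_const _).prodMk ((differentiableAt_const _).prodMk differentiableAt_id)
  have dX1 : DifferentiableAt ℝ (fun s => z1 s y z) x := ((D1 (x, y, z)).comp x hXc :)
  have dX2 : DifferentiableAt ℝ (fun s => z2 s y z) x := ((D2 (x, y, z)).comp x hXc :)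
  have dX3 : DifferentiableAt ℝ (fun s => z3 s y z) x := ((D3 (x, y, z)).comp x hXc :)
  have dY1 : DifferentiableAt ℝ (fun s => z1 x s z) y := ((D1 (x, y, z)).comp y hYc :)
  have dY2 : DifferentiableAt ℝ (fun s => z2 x s z) y := ((D2 (x, y, z)).comp y hYc :)
  have dY3 : DifferentiableAt ℝ (fun s => z3 x s z) y := ((D3 (x, y, z)).comp y hYc :)
  have dZ1 : DifferentiableAt ℝ (fun s => z1 x y s) z := ((D1 (x, y, z)).comp z hZc :)
  have dZ2 : DifferentiableAt ℝ (fun s => z2 x y s) z := ((D2 (x, y, z)).comp z hZc :)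
  have dZ3 : DifferentiableAt ℝ (fun s => z3 x y s) z := ((D3 (x, y, z)).comp z hZc :)
  have EX2 : deriv (fun s => Real.sqrt (z1 s y z ^ 2 + z2 s y z ^ 2 + z3 s y z ^ 2) * z2 s y z) x
      = (z1 x y z * deriv (fun s => z1 s y z) x + z2 x y z * deriv (fun s => z2 s y z) x
          + z3 x y z * deriv (fun s => z3 s y z) x)
          / Real.sqrt (z1 x y z ^ 2 + z2 x y z ^ 2 + z3 x y z ^ 2) * z2 x y z
        + Real.sqrt (z1 x y z ^ 2 + z2 x y z ^ 2 + z3 x y z ^ 2) * deriv (fun s => z2 s y z) x :=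
    key_deriv _ _ _ _ x dX1 dX2 dX3 dX2 hq
  have EX3 : deriv (fun s => Real.sqrt (z1 s y z ^ 2 + z2 s y z ^ 2 + z3 s y z ^ 2) * z3 s y z) x
      = (z1 x y z * deriv (fun s => z1 s y z) x + z2 x y z * deriv (fun s => z2 s y z) x
          + z3 x y z * deriv (fun s => z3 s y z) x)
          / Real.sqrt (z1 x y z ^ 2 + z2 x y z ^ 2 + z3 x y z ^ 2) * z3 x y z
        + Real.sqrt (z1 x y z ^ 2 + z2 x y z ^ 2 + z3 x y z ^ 2) * deriv (fun s => z3 s y z) x :=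
    key_deriv _ _ _ _ x dX1 dX2 dX3 dX3 hq
  have EY1 : deriv (fun s => Real.sqrt (z1 x s z ^ 2 + z2 x s z ^ 2 + z3 x s z ^ 2) * z1 x s z) y
      = (z1 x y z * deriv (fun s => z1 x s z) y + z2 x y z * deriv (fun s => z2 x s z) y
          + z3 x y z * deriv (fun s => z3 x s z) y)
          / Real.sqrt (z1 x y z ^ 2 + z2 x y z ^ 2 + z3 x y z ^ 2) * z1 x y z
        + Real.sqrt (z1 x y z ^ 2 + z2 x y z ^ 2 + z3 x y z ^ 2) * deriv (fun s => z1 x s z) y :=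
    key_deriv _ _ _ _ y dY1 dY2 dY3 dY1 hq
  have EY3 : deriv (fun s => Real.sqrt (z1 x s z ^ 2 + z2 x s z ^ 2 + z3 x s z ^ 2) * z3 x s z) y
      = (z1 x y z * deriv (fun s => z1 x s z) y + z2 x y z * deriv (fun s => z2 x s z) y
          + z3 x y z * deriv (fun s => z3 x s z) y)
          / Real.sqrt (z1 x y z ^ 2 + z2 x y z ^ 2 + z3 x y z ^ 2) * z3 x y z
        + Real.sqrt (z1 x y z ^ 2 + z2 x y z ^ 2 + z3 x y z ^ 2) * deriv (fun s => z3 x s z) y :=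
    key_deriv _ _ _ _ y dY1 dY2 dY3 dY3 hq
  have EZ1 : deriv (fun s => Real.sqrt (z1 x y s ^ 2 + z2 x y s ^ 2 + z3 x y s ^ 2) * z1 x y s) z
      = (z1 x y z * deriv (fun s => z1 x y s) z + z2 x y z * deriv (fun s => z2 x y s) z
          + z3 x y z * deriv (fun s => z3 x y s) z)
          / Real.sqrt (z1 x y z ^ 2 + z2 x y z ^ 2 + z3 x y z ^ 2) * z1 x y z
        + Real.sqrt (z1 x y z ^ 2 + z2 x y z ^ 2 + z3 x y z ^ 2) * deriv (fun s => z1 x y s) z :=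
    key_deriv _ _ _ _ z dZ1 dZ2 dZ3 dZ1 hq
  have EZ2 : deriv (fun s => Real.sqrt (z1 x y s ^ 2 + z2 x y s ^ 2 + z3 x y s ^ 2) * z2 x y s) z
      = (z1 x y z * deriv (fun s => z1 x y s) z + z2 x y z * deriv (fun s => z2 x y s) z
          + z3 x y z * deriv (fun s => z3 x y s) z)
          / Real.sqrt (z1 x y z ^ 2 + z2 x y z ^ 2 + z3 x y z ^ 2) * z2 x y z
        + Real.sqrt (z1 x y z ^ 2 + z2 x y z ^ 2 + z3 x y z ^ 2) * deriv (fun s => z2 x y s) z :=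
    key_deriv _ _ _ _ z dZ1 dZ2 dZ3 dZ2 hq
  refine ⟨?_, ?_, ?_⟩ <;>
    simp only [curl1, curl2, curl3, pX, pY, pZ]
  · rw [EY3, EZ2]; field_simp; ring
  · rw [EZ1, EX3]; field_simp; ring
  · rw [EX2, EY1]; field_simp; ring
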